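/- For any sequence of nonnegative real numbers π(1), π(2), … summing to 1, there exists a partition of the positive integers into pairwise disjoint sets F₁, F₂, … (with ⋃_i F_i = ℕ₊) such that for every i ≥ 1 and every k ≥ 1, the quantity |F_i ∩ {1,…,k}| − π(i)·k lies in the interval [−1, 1]; consequently each F_i has natural density π(i). -/

import Mathlib

open Filter Finset

open scoped Classical in
/-- deadline (as `ℕ∞`) of the next unit of index `j`, given its current count `m`. -/
noncomputable def dl9 (π : ℕ → ℝ) (m j : ℕ) : ℕ∞ :=
  if h : ∃ k : ℕ, (m : ℝ) + 1 < π j * (k : ℝ) then (Nat.find h : ℕ∞) else ⊤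

open scoped Classical in
/-- EDF choice: among eligible indices, pick one of minimal deadline. -/
noncomputable def step9 (π : ℕ → ℝ) (c : ℕ → ℕ) (n : ℕ) : ℕ :=
  if h : ∃ i, ((c i : ℝ) ≤ π i * (n : ℝ) ∧
      ∀ j, (c j : ℝ) ≤ π j * (n : ℝ) → dl9 π (c i) i ≤ dl9 π (c j) j)
  then h.choose else 0

noncomputable def cnt9 (π : ℕ → ℝ) : ℕ → ℕ → ℕ
  | 0 => fun _ => 0
  | (k+1) => fun i => cnt9 π k i + if step9 π (cnt9 π k) (k+1) = i then 1 else 0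

noncomputable def sig9 (π : ℕ → ℝ) (n : ℕ) : ℕ := step9 π (cnt9 π (n-1)) n

lemma dl9_le_iff (π : ℕ → ℝ) {j : ℕ} (hj : 0 ≤ π j) (m b : ℕ) :
    dl9 π m j ≤ (b : ℕ∞) ↔ (m : ℝ) + 1 < π j * (b : ℝ) := by
  classical
  unfold dl9
  split_ifs with h
  · constructor
    · intro hle
      have hfind := Nat.find_spec h
      have hfb : (Nat.find h : ℕ) ≤ b := by exact_mod_cast hle
      calc (m : ℝ) + 1 < π j * (Nat.find h : ℝ) := hfind
        _ ≤ π j * (b : ℝ) := by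
            apply mul_le_mul_of_nonneg_left _ hj
            exact_mod_cast hfb
    · intro hb
      exact_mod_cast Nat.find_min' h hb
  · constructor
    · intro hle; exact absurd hle (by simp)
    · intro hb; exact absurd ⟨b, hb⟩ h

lemma cnt9_succ (π : ℕ → ℝ) (k i : ℕ) :
    cnt9 π (k+1) i = cnt9 π k i + if sig9 π (k+1) = i then 1 else 0 := by
  simp only [cnt9, sig9, Nat.add_sub_cancel]

lemma cnt9_mono (π : ℕ → ℝ) (i : ℕ) : Monotone fun k => cnt9 π k i := by
  apply monotone_nat_of_le_succ
  intro k
  rw [cnt9_succ]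
  exact Nat.le_add_right _ _

lemma cnt9_eq_card (π : ℕ → ℝ) (k i : ℕ) :
    cnt9 π k i = ((Finset.Icc 1 k).filter fun n => sig9 π n = i).card := by
  induction k with
  | zero => simp [cnt9]
  | succ k ih =>
    rw [cnt9_succ, ih, ← Finset.insert_Icc_right_eq_Icc_add_one (by omega : 1 ≤ k + 1),
      Finset.filter_insert]
    split_ifs with h
    · rw [Finset.card_insert_of_notMem (by simp [Finset.mem_filter])]
    · simp

lemma cnt9_support (π : ℕ → ℝ) (k i : ℕ) (h : cnt9 π k i ≠ 0) :
    i ∈ (Finset.Icc 1 k).image (sig9 π) := by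
  rw [cnt9_eq_card] at h
  obtain ⟨n, hn⟩ := Finset.card_ne_zero.mp h
  rw [Finset.mem_filter] at hn
  exact Finset.mem_image.mpr ⟨n, hn.1, hn.2⟩

lemma exists_cnt9_zero (π : ℕ → ℝ) (k : ℕ) : ∃ i, cnt9 π k i = 0 := by
  refine ⟨((Finset.Icc 1 k).image (sig9 π)).sup id + 1, ?_⟩
  by_contra h
  have h2 := cnt9_support π k _ h
  have h3 := Finset.le_sup (f := id) h2
  simp only [id] at h3
  omega

lemma sum_cnt9 (π : ℕ → ℝ) (k : ℕ) {T : Finset ℕ}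
    (hT : (Finset.Icc 1 k).image (sig9 π) ⊆ T) :
    ∑ j ∈ T, cnt9 π k j = k := by
  classical
  have h1 := Finset.card_eq_sum_card_fiberwise
    (f := sig9 π) (s := Finset.Icc 1 k) (t := (Finset.Icc 1 k).image (sig9 π))
    (fun x hx => Finset.mem_image_of_mem _ hx)
  have h2 : ∑ j ∈ T, cnt9 π k j = ∑ j ∈ (Finset.Icc 1 k).image (sig9 π), cnt9 π k j := by
    refine (Finset.sum_subset hT (fun x _ hx => ?_)).symm
    by_contra hzz
    exact hx (cnt9_support π k x hzz)
  rw [h2]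
  simp only [cnt9_eq_card]
  rw [← h1, Nat.card_Icc]
  omega

lemma step9_spec (π : ℕ → ℝ) (hπ0 : ∀ i, 0 ≤ π i) (k : ℕ) :
    ((cnt9 π k (sig9 π (k+1)) : ℝ) ≤ π (sig9 π (k+1)) * ((k+1 : ℕ) : ℝ) ∧
    ∀ j, (cnt9 π k j : ℝ) ≤ π j * ((k+1 : ℕ) : ℝ) →
      dl9 π (cnt9 π k (sig9 π (k+1))) (sig9 π (k+1)) ≤ dl9 π (cnt9 π k j) j) := by
  classical
  have hex : ∃ i, ((cnt9 π k i : ℝ) ≤ π i * ((k+1 : ℕ) : ℝ) ∧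
      ∀ j, (cnt9 π k j : ℝ) ≤ π j * ((k+1 : ℕ) : ℝ) →
        dl9 π (cnt9 π k i) i ≤ dl9 π (cnt9 π k j) j) := by
    obtain ⟨i0, hi0⟩ := exists_cnt9_zero π k
    have helig : ∃ i, (cnt9 π k i : ℝ) ≤ π i * ((k+1 : ℕ) : ℝ) := by
      refine ⟨i0, ?_⟩
      rw [hi0]
      have : (0:ℝ) ≤ π i0 * ((k+1 : ℕ) : ℝ) := mul_nonneg (hπ0 i0) (by positivity)
      simpa using this
    set S : Set ℕ∞ :=
      {d | ∃ j, (cnt9 π k j : ℝ) ≤ π j * ((k+1 : ℕ) : ℝ) ∧ dl9 π (cnt9 π k j) j = d} with hSdef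
    have hS : S.Nonempty := ⟨_, helig.choose, helig.choose_spec, rfl⟩
    obtain ⟨d, hdS, hmin⟩ := (wellFounded_lt (α := ℕ∞)).has_min S hS
    obtain ⟨j0, hj0, hdj⟩ := hdS
    refine ⟨j0, hj0, fun j hj => ?_⟩
    rw [hdj]
    have hmem : dl9 π (cnt9 π k j) j ∈ S := ⟨j, hj, rfl⟩
    exact le_of_not_gt (hmin _ hmem)
  have h1 : sig9 π (k+1) = hex.choose := by
    simp only [sig9, Nat.add_sub_cancel, step9, dif_pos hex]
  rw [h1]
  exact hex.choose_spec

lemma cnt9_le (π : ℕ → ℝ) (hπ0 : ∀ i, 0 ≤ π i) (k i : ℕ) :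
    (cnt9 π k i : ℝ) ≤ π i * (k : ℝ) + 1 := by
  induction k with
  | zero => simp [cnt9]
  | succ k ih =>
    rw [cnt9_succ]
    by_cases h : sig9 π (k+1) = i
    · have hel := (step9_spec π hπ0 k).1
      rw [h] at hel
      rw [if_pos h]
      push_cast
      push_cast at hel
      linarith
    · rw [if_neg h]
      push_cast
      have : π i * (k : ℝ) ≤ π i * ((k : ℝ) + 1) := by nlinarith [hπ0 i]
      linarith

lemma cnt9_ge (π : ℕ → ℝ) (hπ0 : ∀ i, 0 ≤ π i) (hsum : Summable π)
    (hπ1 : ∑' i, π i = 1) (k i : ℕ) :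
    π i * (k : ℝ) - 1 ≤ (cnt9 π k i : ℝ) := by
  classical
  by_contra hcon0
  push_neg at hcon0
  -- package as an existence statement to name (b, i0)
  have hcon : ∃ b i0, (cnt9 π b i0 : ℝ) < π i0 * (b : ℝ) - 1 := ⟨k, i, hcon0⟩
  clear hcon0
  obtain ⟨b, i0, hmiss⟩ := hcon
  have hT1 : ∀ T : Finset ℕ, ∑ j ∈ T, π j ≤ 1 := fun T =>
    hπ1 ▸ hsum.sum_le_tsum T (fun i _ => hπ0 i)
  -- find the last slot `a` in [1,b] scheduling a deadline-> b unit (0 if none)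
  set S : Finset ℕ := (Finset.Icc 1 b).filter
      (fun n => ¬ dl9 π (cnt9 π (n-1) (sig9 π n)) (sig9 π n) ≤ (b : ℕ∞)) with hSdef
  obtain ⟨a, hab, hwin, hamax⟩ :
      ∃ a, a ≤ b ∧
        (∀ n, a < n → n ≤ b →
          dl9 π (cnt9 π (n-1) (sig9 π n)) (sig9 π n) ≤ (b : ℕ∞)) ∧
        (1 ≤ a → ¬ dl9 π (cnt9 π (a-1) (sig9 π a)) (sig9 π a) ≤ (b : ℕ∞)) := by
    by_cases hS : S.Nonempty
    · refine ⟨S.max' hS, ?_, ?_, ?_⟩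
      · exact (Finset.mem_Icc.mp (Finset.mem_filter.mp (S.max'_mem hS)).1).2
      · intro n h1 h2
        by_contra h
        have hmem : n ∈ S :=
          Finset.mem_filter.mpr ⟨Finset.mem_Icc.mpr ⟨by omega, h2⟩, h⟩
        have := S.le_max' n hmem
        omega
      · intro _
        exact (Finset.mem_filter.mp (S.max'_mem hS)).2
    · refine ⟨0, by omega, ?_, fun h => absurd h (by norm_num)⟩
      intro n h1 h2
      by_contra h
      exact hS ⟨n, Finset.mem_filter.mpr ⟨Finset.mem_Icc.mpr ⟨by omega, h2⟩, h⟩⟩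
  -- key fact: units scheduled in (a,b] stay strictly below π j * b
  have hkey : ∀ n, a < n → n ≤ b → (cnt9 π n (sig9 π n) : ℝ) < π (sig9 π n) * (b : ℝ) := by
    intro n h1n h2n
    obtain ⟨m, rfl⟩ : ∃ m, n = m + 1 := ⟨n - 1, by omega⟩
    have hd := hwin (m+1) h1n h2n
    simp only [Nat.add_sub_cancel] at hd
    rw [dl9_le_iff π (hπ0 _)] at hd
    rw [cnt9_succ, if_pos rfl]
    push_cast
    linarith
  -- dichotomy at slot a (if a ≥ 1): either j was strictly over quota at a,
  -- or j's pending deadline at a exceeded b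
  have hatA : ∀ j, 1 ≤ a →
      (π j * (a : ℝ) < (cnt9 π a j : ℝ) ∨ π j * (b : ℝ) ≤ (cnt9 π (a-1) j : ℝ) + 1) := by
    intro j ha
    obtain ⟨m, rfl⟩ : ∃ m, a = m + 1 := ⟨a - 1, by omega⟩
    simp only [Nat.add_sub_cancel] at hamax ⊢
    by_cases helig : (cnt9 π m j : ℝ) ≤ π j * ((m+1 : ℕ) : ℝ)
    · right
      have hspec := (step9_spec π hπ0 m).2 j helig
      have h2 : ¬ dl9 π (cnt9 π m j) j ≤ (b : ℕ∞) :=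
        fun hle => (hamax (by omega)) (hspec.trans hle)
      rw [dl9_le_iff π (hπ0 j)] at h2
      push_neg at h2
      linarith
    · left
      push_neg at helig
      have hmono : cnt9 π m j ≤ cnt9 π (m+1) j := cnt9_mono π j (by omega)
      have : ((cnt9 π m j : ℕ) : ℝ) ≤ ((cnt9 π (m+1) j : ℕ) : ℝ) := by exact_mod_cast hmono
      push_cast at helig ⊢
      linarith
  -- window invariant
  have hinv : ∀ n, a ≤ n → n ≤ b → ∀ j,
      cnt9 π n j = cnt9 π a j ∨
      ((cnt9 π n j : ℝ) < π j * (b : ℝ) ∧ π j * (a : ℝ) ≤ (cnt9 π a j : ℝ)) := by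
    intro n han
    induction n, han using Nat.le_induction with
    | base => intro _ j; left; rfl
    | succ n han ih =>
      intro hnb j
      have ihj := ih (by omega) j
      by_cases hj : sig9 π (n+1) = j
      · right
        have hklt := hkey (n+1) (by omega) hnb
        rw [hj] at hklt
        rw [cnt9_succ, if_pos hj] at hklt ⊢
        push_cast at hklt
        constructor
        · push_cast
          linarith
        · rcases ihj with heq | ⟨_, hok⟩
          · -- first increment in the window
            by_cases haz : 1 ≤ a
            · rcases hatA j haz with hlt | hub
              · linarith
              · exfalso
                have hmono : cnt9 π (a-1) j ≤ cnt9 π n j := cnt9_mono π j (by omega)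
                have hmono' : ((cnt9 π (a-1) j : ℕ) : ℝ) ≤ ((cnt9 π n j : ℕ) : ℝ) := by
                  exact_mod_cast hmono
                rw [heq] at hklt hmono'
                linarith
            · have ha0 : a = 0 := by omega
              simp [ha0, cnt9]
          · exact hok
      · rw [cnt9_succ, if_neg hj, Nat.add_zero]
        exact ihj
  -- i0's count at a is at least its quota
  have hi0a : π i0 * (a : ℝ) ≤ (cnt9 π a i0 : ℝ) := by
    by_cases haz : 1 ≤ a
    · rcases hatA i0 haz with hlt | hub
      · linarith
      · exfalso
        have hmono : cnt9 π (a-1) i0 ≤ cnt9 π b i0 := cnt9_mono π i0 (by omega)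
        have hmono' : ((cnt9 π (a-1) i0 : ℕ) : ℝ) ≤ ((cnt9 π b i0 : ℕ) : ℝ) := by
          exact_mod_cast hmono
        linarith
    · have ha0 : a = 0 := by omega
      simp [ha0, cnt9, mul_nonneg (hπ0 i0)]
  -- the counting contradiction
  set T : Finset ℕ := insert i0 ((Finset.Icc 1 b).image (sig9 π)) with hTdef
  have hi0T : i0 ∈ T := Finset.mem_insert_self _ _
  have hsb : ∑ j ∈ T, cnt9 π b j = b :=
    sum_cnt9 π b (Finset.subset_insert _ _)
  have hsa : ∑ j ∈ T, cnt9 π a j = a := by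
    refine sum_cnt9 π a ?_
    refine subset_trans ?_ (Finset.subset_insert _ _)
    exact Finset.image_subset_image (Finset.Icc_subset_Icc_right hab)
  have hba : (0:ℝ) ≤ (b : ℝ) - (a : ℝ) := by
    have : (a : ℝ) ≤ (b : ℝ) := by exact_mod_cast hab
    linarith
  have hterm : ∀ j ∈ T.erase i0,
      ((cnt9 π b j : ℝ) - (cnt9 π a j : ℝ)) ≤ π j * ((b : ℝ) - (a : ℝ)) := by
    intro j hj
    rcases hinv b hab le_rfl j with heq | ⟨hlt, hge⟩
    · rw [heq]
      simp only [sub_self]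
      exact mul_nonneg (hπ0 j) hba
    · have : π j * ((b:ℝ) - (a:ℝ)) = π j * (b:ℝ) - π j * (a:ℝ) := by ring
      linarith
  have htermi0 : ((cnt9 π b i0 : ℝ) - (cnt9 π a i0 : ℝ)) < π i0 * ((b : ℝ) - (a : ℝ)) - 1 := by
    have : π i0 * ((b:ℝ) - (a:ℝ)) = π i0 * (b:ℝ) - π i0 * (a:ℝ) := by ring
    linarith
  have hsplitb : (cnt9 π b i0 : ℕ) + ∑ j ∈ T.erase i0, cnt9 π b j = b := by
    rw [Finset.add_sum_erase _ _ hi0T]; exact hsb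
  have hsplita : (cnt9 π a i0 : ℕ) + ∑ j ∈ T.erase i0, cnt9 π a j = a := by
    rw [Finset.add_sum_erase _ _ hi0T]; exact hsa
  have hsum_erase : ∑ j ∈ T.erase i0, ((cnt9 π b j : ℝ) - (cnt9 π a j : ℝ))
      ≤ ∑ j ∈ T.erase i0, π j * ((b : ℝ) - (a : ℝ)) := Finset.sum_le_sum hterm
  have hTpi : π i0 * ((b:ℝ) - (a:ℝ)) + ∑ j ∈ T.erase i0, π j * ((b : ℝ) - (a : ℝ))
      = (∑ j ∈ T, π j) * ((b:ℝ) - (a:ℝ)) := by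
    rw [Finset.sum_mul, ← Finset.add_sum_erase _ _ hi0T]
  have hple : (∑ j ∈ T, π j) * ((b:ℝ) - (a:ℝ)) ≤ 1 * ((b:ℝ) - (a:ℝ)) :=
    mul_le_mul_of_nonneg_right (hT1 T) hba
  have hcastb : ((cnt9 π b i0 : ℝ) + ∑ j ∈ T.erase i0, ((cnt9 π b j : ℕ) : ℝ)) = (b : ℝ) := by
    exact_mod_cast congrArg (Nat.cast : ℕ → ℝ) hsplitb
  have hcasta : ((cnt9 π a i0 : ℝ) + ∑ j ∈ T.erase i0, ((cnt9 π a j : ℕ) : ℝ)) = (a : ℝ) := by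
    exact_mod_cast congrArg (Nat.cast : ℕ → ℝ) hsplita
  have hdiff : ∑ j ∈ T.erase i0, ((cnt9 π b j : ℝ) - (cnt9 π a j : ℝ))
      = (∑ j ∈ T.erase i0, ((cnt9 π b j : ℕ) : ℝ)) - ∑ j ∈ T.erase i0, ((cnt9 π a j : ℕ) : ℝ) :=
    Finset.sum_sub_distrib _ _
  linarith

/-- For any nonnegative reals `π(1), π(2), …` summing to 1 (here `π i` is `π(i+1)`),
there is a partition of the positive integers into pairwise disjoint sets
`F₁, F₂, …` (here `F i` is `F_{i+1}`) such that for every `i` and every `k ≥ 1`,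
`|F_i ∩ {1,…,k}| - π(i)·k ∈ [-1,1]`; consequently each `F_i` has natural density
`π(i)`. -/
theorem stmt_9 (π : ℕ → ℝ) (hπ0 : ∀ i, 0 ≤ π i) (hπ1 : ∑' i, π i = 1) :
    ∃ F : ℕ → Set ℕ,
      (Pairwise fun i j => Disjoint (F i) (F j)) ∧
      (⋃ i, F i) = {n : ℕ | 1 ≤ n} ∧
      (∀ i, ∀ k : ℕ, 1 ≤ k →
        ((F i ∩ Set.Icc 1 k).ncard : ℝ) - π i * k ∈ Set.Icc (-1 : ℝ) 1) ∧
      (∀ i, Filter.Tendsto (fun k : ℕ => ((F i ∩ Set.Icc 1 k).ncard : ℝ) / k)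
        Filter.atTop (nhds (π i))) := by
  classical
  have hsum : Summable π := by
    by_contra h
    rw [tsum_eq_zero_of_not_summable h] at hπ1
    norm_num at hπ1
  refine ⟨fun i => {n | 1 ≤ n ∧ sig9 π n = i}, ?_, ?_, ?_, ?_⟩
  case _ =>
    intro i j hij
    rw [Set.disjoint_left]
    rintro n ⟨_, h1⟩ ⟨_, h2⟩
    exact hij (h1 ▸ h2)
  case _ =>
    ext n
    simp only [Set.mem_iUnion, Set.mem_setOf_eq]
    constructor
    · rintro ⟨i, h1, _⟩; exact h1
    · intro h; exact ⟨sig9 π n, h, rfl⟩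
  all_goals {
    have hc : ∀ i k, (({n | 1 ≤ n ∧ sig9 π n = i} ∩ Set.Icc 1 k).ncard : ℕ) = cnt9 π k i := by
      intro i k
      rw [cnt9_eq_card]
      have hset : {n | 1 ≤ n ∧ sig9 π n = i} ∩ Set.Icc 1 k
          = ↑((Finset.Icc 1 k).filter fun n => sig9 π n = i) := by
        ext n
        simp only [Set.mem_inter_iff, Set.mem_setOf_eq, Set.mem_Icc, Finset.coe_filter,
          Finset.mem_Icc]
        constructor
        · rintro ⟨⟨h1, h2⟩, h3, h4⟩; exact ⟨⟨h3, h4⟩, h2⟩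
        · rintro ⟨⟨h3, h4⟩, h2⟩; exact ⟨⟨h3, h2⟩, h3, h4⟩
      rw [hset, Set.ncard_coe_finset]
    first
    | { -- discrepancy bound
        intro i k _
        rw [hc i k, Set.mem_Icc]
        have h1 := cnt9_ge π hπ0 hsum hπ1 k i
        have h2 := cnt9_le π hπ0 k i
        constructor <;> linarith }
    | { -- density
        intro i
        have h0 : Filter.Tendsto (fun k : ℕ => (cnt9 π k i : ℝ) / k - π i)
            Filter.atTop (nhds 0) := by
          apply squeeze_zero_norm' (a := fun k : ℕ => 1 / (k : ℝ))
          · filter_upwards [eventually_ge_atTop 1] with k hk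
            have hk0 : (0:ℝ) < (k : ℝ) := by exact_mod_cast hk
            have h1 := cnt9_ge π hπ0 hsum hπ1 k i
            have h2 := cnt9_le π hπ0 k i
            have hrw : (cnt9 π k i : ℝ) / k - π i = ((cnt9 π k i : ℝ) - π i * k) / k := by
              field_simp
            rw [Real.norm_eq_abs, hrw, abs_div, abs_of_pos hk0]
            have habs : |(cnt9 π k i : ℝ) - π i * k| ≤ 1 :=
              abs_le.mpr ⟨by linarith, by linarith⟩
            rw [div_le_div_iff₀ hk0 hk0]
            nlinarith
          · exact tendsto_one_div_atTop_nhds_zero_nat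
        have h1 : Filter.Tendsto (fun k : ℕ => ((cnt9 π k i : ℝ) / k - π i) + π i)
            Filter.atTop (nhds (0 + π i)) := h0.add tendsto_const_nhds
        rw [zero_add] at h1
        have hfe : (fun k : ℕ => (({n | 1 ≤ n ∧ sig9 π n = i} ∩ Set.Icc 1 k).ncard : ℝ) / k)
            = fun k : ℕ => (cnt9 π k i : ℝ) / k := by
          funext k
          rw [hc i k]
        rw [hfe]
        simpa using h1 }
  }
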